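/- Let C_0 ⊆ F_2^n be a nonempty code whose distinct elements are at pairwise Hamming distance at least d, let t = ⌊(d−1)/2⌋, and let ε > 0. If ρ is a pmf on F_2^n satisfying d_TV(P_{C_0} ∗ ρ, U_n) ≤ ε, then Σ_{x : |x| ≤ t} ρ(x) ≤ |C_0|·V_n(t)/2^n + ε, and also Σ_{x : |x| ≥ n−t} ρ(x) ≤ |C_0|·V_n(t)/2^n + ε. -/

import Mathlib

open Finset Filter
open scoped Classical BigOperators Topology

abbrev BV (n : ℕ) := Fin n → ZMod 2

def wt {n : ℕ} (x : BV n) : ℕ := (Finset.univ.filter (fun i => x i ≠ 0)).card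

def dotp {n : ℕ} (x y : BV n) : ZMod 2 := ∑ i, x i * y i

def IsPMF {α : Type*} [Fintype α] (P : α → ℝ) : Prop :=
  (∀ x, 0 ≤ P x) ∧ ∑ x, P x = 1

noncomputable def dTV {α : Type*} [Fintype α] (P Q : α → ℝ) : ℝ :=
  (1/2) * ∑ x, |P x - Q x|

noncomputable def unif (α : Type*) [Fintype α] : α → ℝ := fun _ => 1 / (Fintype.card α)

noncomputable def unifOn {α : Type*} [Fintype α] (S : Set α) : α → ℝ :=
  fun x => if x ∈ S then 1 / (Nat.card S) else 0

noncomputable def conv {n : ℕ} (P Q : BV n → ℝ) : BV n → ℝ :=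
  fun x => ∑ y, P y * Q (x - y)

noncomputable def FT {n : ℕ} (f : BV n → ℝ) : BV n → ℝ :=
  fun y => (1 / 2^n) * ∑ x, f x * (if dotp x y = 0 then (1:ℝ) else -1)

noncomputable def Kraw (n w i : ℕ) : ℝ :=
  ∑ j ∈ Finset.range (w+1), (-1:ℝ)^j * (Nat.choose i j) * (Nat.choose (n-i) (w-j))

def Vball (n t : ℕ) : ℕ := ∑ j ∈ Finset.range (t+1), Nat.choose n j

noncomputable def pmfMap {m n : ℕ} (G : Matrix (Fin m) (Fin n) (ZMod 2)) (P : BV n → ℝ) :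
    BV m → ℝ :=
  fun u => ∑ z ∈ Finset.univ.filter (fun z => G.mulVec z = u), P z

noncomputable def biasOf {n : ℕ} (e : BV n) (P : BV n → ℝ) : ℝ :=
  1/2 - ∑ z ∈ Finset.univ.filter (fun z => dotp e z = 1), P z

noncomputable def bitPMF {n : ℕ} (e : BV n) (P : BV n → ℝ) : ZMod 2 → ℝ :=
  fun b => ∑ z ∈ Finset.univ.filter (fun z => dotp e z = b), P z

noncomputable def jointPMF {m n : ℕ} (G : Matrix (Fin m) (Fin n) (ZMod 2)) (e : BV n)
    (P : BV n → ℝ) : BV m × ZMod 2 → ℝ :=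
  fun p => ∑ z ∈ Finset.univ.filter (fun z => G.mulVec z = p.1 ∧ dotp e z = p.2), P z

noncomputable def prodPMF {m : ℕ} (Pb : ZMod 2 → ℝ) : BV m × ZMod 2 → ℝ :=
  fun p => (1 / 2^m) * Pb p.2

def dualSet {n : ℕ} (C : Set (BV n)) : Set (BV n) := {y | ∀ c ∈ C, dotp y c = 0}

def rowSpan {k n : ℕ} (G : Matrix (Fin k) (Fin n) (ZMod 2)) : Submodule (ZMod 2) (BV n) :=
  Submodule.span (ZMod 2) (Set.range (fun i => G i))

lemma filter_indicator {n : ℕ} (s : Finset (Fin n)) :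
    Finset.univ.filter (fun i => (if i ∈ s then (1:ZMod 2) else 0) ≠ 0) = s := by
  ext i; by_cases h : i ∈ s <;> simp [h]

lemma card_wt_eq (n j : ℕ) :
    (Finset.univ.filter (fun x : BV n => wt x = j)).card = Nat.choose n j := by
  have hpc : (Finset.powersetCard j (Finset.univ : Finset (Fin n))).card = Nat.choose n j := by
    simp [Finset.card_powersetCard]
  rw [← hpc]
  have h2 : ∀ a b : ZMod 2, (a ≠ 0 ↔ b ≠ 0) → a = b := by decide
  apply Finset.card_bij (fun x _ => Finset.univ.filter (fun i => x i ≠ 0))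
  · intro x hx
    simp only [Finset.mem_filter, Finset.mem_univ, true_and, wt] at hx
    exact Finset.mem_powersetCard.mpr ⟨Finset.subset_univ _, (Finset.mem_filter.mp hx).2⟩
  · intro x hx y hy h
    funext i
    have hi := Finset.ext_iff.mp h i
    simp only [Finset.mem_filter, Finset.mem_univ, true_and] at hi
    exact h2 _ _ hi
  · intro s hs
    rw [Finset.mem_powersetCard] at hs
    refine ⟨fun i => if i ∈ s then 1 else 0, ?_, filter_indicator s⟩
    simp only [Finset.mem_filter, Finset.mem_univ, true_and, wt, filter_indicator]
    exact Finset.mem_filter.mpr ⟨Finset.mem_univ _, by convert hs.2 using 2; convert filter_indicator s⟩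

lemma card_wt_le (n t : ℕ) :
    ((Finset.univ : Finset (BV n)).filter (fun x => wt x ≤ t)).card = Vball n t := by
  rw [Vball]
  have heq : (Finset.univ : Finset (BV n)).filter (fun x => wt x ≤ t)
      = (Finset.range (t+1)).biUnion (fun j => Finset.univ.filter (fun x => wt x = j)) := by
    ext x
    simp [Nat.lt_succ_iff]
  rw [heq, Finset.card_biUnion]
  · exact Finset.sum_congr rfl fun j _ => card_wt_eq n j
  · intro j _ k _ hjk
    simp only [Finset.disjoint_left, Finset.mem_filter]
    rintro x ⟨-, h1⟩ ⟨-, h2⟩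
    exact hjk (h1 ▸ h2 ▸ rfl)

lemma wt_add_one {n : ℕ} (x : BV n) : wt (x + (fun _ => 1)) = n - wt x ∧ wt x ≤ n := by
  have key : ∀ a : ZMod 2, (a + 1 ≠ 0) ↔ a = 0 := by decide
  have h1 : (Finset.univ.filter (fun i => x i ≠ 0)).card
      + (Finset.univ.filter (fun i => ¬ x i ≠ 0)).card = n := by
    rw [Finset.card_filter_add_card_filter_not, Finset.card_univ, Fintype.card_fin]
  have h2 : wt (x + (fun _ => 1)) = (Finset.univ.filter (fun i => ¬ x i ≠ 0)).card := by
    unfold wt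
    congr 1
    ext i
    simp [key, Pi.add_apply]
  constructor
  · rw [h2]; unfold wt; omega
  · unfold wt; omega

lemma card_wt_ge_le (n t : ℕ) :
    ((Finset.univ : Finset (BV n)).filter (fun x => n - t ≤ wt x)).card ≤ Vball n t := by
  rw [← card_wt_le n t]
  apply Finset.card_le_card_of_injOn (fun x => x + (fun _ => 1))
  · intro x hx
    simp only [Finset.coe_filter, Set.mem_setOf_eq, Finset.mem_coe, Finset.mem_filter, Finset.mem_univ, true_and] at *
    obtain ⟨h1, h2⟩ := wt_add_one x
    omega
  · intro x _ y _ h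
    exact add_right_cancel h

lemma key_lemma (n : ℕ) (C0 : Finset (BV n)) (hC0 : C0.Nonempty)
    (ε : ℝ) (hε : 0 < ε) (ρ : BV n → ℝ) (hρ : IsPMF ρ)
    (ht : dTV (conv (unifOn (↑C0 : Set (BV n))) ρ) (unif (BV n)) ≤ ε)
    (T : Finset (BV n)) :
    ∑ x ∈ T, ρ x ≤ (C0.card : ℝ) * T.card / 2 ^ n + ε := by
  classical
  obtain ⟨hρ0, hρ1⟩ := hρ
  have hN : 0 < C0.card := hC0.card_pos
  have hNR : (0:ℝ) < C0.card := by exact_mod_cast hN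
  have h2n : (0:ℝ) < 2 ^ n := by positivity
  have hcard : (Fintype.card (BV n) : ℝ) = 2 ^ n := by
    simp [BV, ZMod.card]
  have hU : ∀ z : BV n, unif (BV n) z = 1 / 2 ^ n := by
    intro z; rw [unif, hcard]
  have hP : ∀ x, unifOn (↑C0 : Set (BV n)) x = if x ∈ C0 then (1 / (C0.card:ℝ)) else 0 := by
    intro x
    simp [unifOn, Nat.card_coe_set_eq, Set.ncard_coe_finset]
  have hconv : ∀ z, conv (unifOn (↑C0 : Set (BV n))) ρ z
      = ∑ y ∈ C0, (1 / (C0.card:ℝ)) * ρ (z - y) := by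
    intro z
    rw [conv]
    simp only [hP, ite_mul, zero_mul, Finset.sum_ite_mem, Finset.univ_inter]
  have hsub : ∀ y : BV n, ∑ z : BV n, ρ (z - y) = 1 := by
    intro y
    rw [Fintype.sum_equiv (Equiv.subRight y) (fun z => ρ (z - y)) ρ (fun z => rfl), hρ1]
  have hconv1 : ∑ z, conv (unifOn (↑C0 : Set (BV n))) ρ z = 1 := by
    simp_rw [hconv]
    rw [Finset.sum_comm]
    calc ∑ y ∈ C0, ∑ z : BV n, (1/(C0.card:ℝ)) * ρ (z - y)
        = ∑ _y ∈ C0, (1/(C0.card:ℝ)) := by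
          refine Finset.sum_congr rfl fun y _ => ?_
          rw [← Finset.mul_sum, hsub y, mul_one]
      _ = 1 := by
          rw [Finset.sum_const, nsmul_eq_mul]; field_simp
  have hU1 : ∑ z : BV n, unif (BV n) z = 1 := by
    rw [Finset.sum_congr rfl (fun z _ => hU z), Finset.sum_const, Finset.card_univ,
      nsmul_eq_mul, hcard]
    field_simp
  set B : Finset (BV n) := (C0 ×ˢ T).image (fun p => p.1 + p.2) with hB
  have hBsub : ∀ y ∈ C0, ∀ x ∈ T, y + x ∈ B := fun y hy x hx =>
    Finset.mem_image.mpr ⟨(y, x), Finset.mem_product.mpr ⟨hy, hx⟩, rfl⟩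
  have hBcard : (B.card : ℝ) ≤ (C0.card : ℝ) * T.card := by
    have h := Finset.card_image_le (s := C0 ×ˢ T) (f := fun p : BV n × BV n => p.1 + p.2)
    rw [Finset.card_product] at h
    exact_mod_cast h
  have hlow : ∑ x ∈ T, ρ x ≤ ∑ z ∈ B, conv (unifOn (↑C0 : Set (BV n))) ρ z := by
    have hstep : ∀ y ∈ C0, ∑ x ∈ T, ρ x ≤ ∑ z ∈ B, ρ (z - y) := by
      intro y hy
      have him : ∑ x ∈ T, ρ x = ∑ z ∈ T.image (fun x => y + x), ρ (z - y) := by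
        rw [Finset.sum_image (fun a _ b _ h => add_left_cancel h)]
        exact Finset.sum_congr rfl fun x _ => by rw [add_sub_cancel_left]
      rw [him]
      apply Finset.sum_le_sum_of_subset_of_nonneg
      · intro z hz
        obtain ⟨x, hx, rfl⟩ := Finset.mem_image.mp hz
        exact hBsub y hy x hx
      · intro z _ _; exact hρ0 _
    have hsum : ∑ x ∈ T, ρ x = ∑ _y ∈ C0, (1/(C0.card:ℝ)) * ∑ x ∈ T, ρ x := by
      rw [Finset.sum_const, nsmul_eq_mul]
      field_simp
    rw [hsum]
    calc ∑ _y ∈ C0, (1/(C0.card:ℝ)) * ∑ x ∈ T, ρ x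
        ≤ ∑ y ∈ C0, (1/(C0.card:ℝ)) * ∑ z ∈ B, ρ (z - y) := by
          refine Finset.sum_le_sum fun y hy => ?_
          exact mul_le_mul_of_nonneg_left (hstep y hy) (one_div_nonneg.mpr hNR.le)
      _ = ∑ z ∈ B, conv (unifOn (↑C0 : Set (BV n))) ρ z := by
          simp_rw [Finset.mul_sum]
          rw [Finset.sum_comm]
          exact Finset.sum_congr rfl fun z _ => (hconv z).symm
  have hupper : ∑ z ∈ B, conv (unifOn (↑C0 : Set (BV n))) ρ z ≤ (B.card : ℝ)/2^n + ε := by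
    set f : BV n → ℝ := fun z => conv (unifOn (↑C0 : Set (BV n))) ρ z - unif (BV n) z with hf
    have hzero : ∑ z, f z = 0 := by
      simp only [hf]
      rw [Finset.sum_sub_distrib, hconv1, hU1, sub_self]
    have habs : ∑ z, |f z| ≤ 2 * ε := by
      have heq : ∑ z, |f z| = 2 * dTV (conv (unifOn (↑C0 : Set (BV n))) ρ) (unif (BV n)) := by
        rw [dTV]; ring
      rw [heq]; linarith
    have hsplit : ∑ z ∈ B, f z + ∑ z ∈ Bᶜ, f z = 0 := by
      rw [Finset.sum_add_sum_compl]; exact hzero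
    have habs_split : ∑ z ∈ B, |f z| + ∑ z ∈ Bᶜ, |f z| = ∑ z, |f z| :=
      Finset.sum_add_sum_compl B _
    have h1 : ∑ z ∈ B, f z ≤ ∑ z ∈ B, |f z| := Finset.sum_le_sum fun z _ => le_abs_self _
    have h2 : -∑ z ∈ Bᶜ, f z ≤ ∑ z ∈ Bᶜ, |f z| := by
      rw [← Finset.sum_neg_distrib]
      exact Finset.sum_le_sum fun z _ => neg_le_abs _
    have hBf : ∑ z ∈ B, f z ≤ ε := by linarith
    have hBu : ∑ z ∈ B, unif (BV n) z = (B.card:ℝ)/2^n := by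
      rw [Finset.sum_congr rfl (fun z _ => hU z), Finset.sum_const, nsmul_eq_mul, mul_one_div]
    have hdecomp : ∑ z ∈ B, conv (unifOn (↑C0 : Set (BV n))) ρ z
        = ∑ z ∈ B, f z + (B.card:ℝ)/2^n := by
      simp only [hf]
      rw [Finset.sum_sub_distrib, hBu]
      ring
    linarith
  calc ∑ x ∈ T, ρ x ≤ ∑ z ∈ B, conv (unifOn (↑C0 : Set (BV n))) ρ z := hlow
    _ ≤ (B.card:ℝ)/2^n + ε := hupper
    _ ≤ (C0.card : ℝ) * T.card / 2 ^ n + ε := by gcongr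


theorem flatness_lemma (n d : ℕ) (C0 : Finset (BV n)) (hC0 : C0.Nonempty)
    (hdist : ∀ x ∈ C0, ∀ y ∈ C0, x ≠ y → d ≤ wt (x - y))
    (ε : ℝ) (hε : 0 < ε) (ρ : BV n → ℝ) (hρ : IsPMF ρ)
    (ht : dTV (conv (unifOn (↑C0 : Set (BV n))) ρ) (unif (BV n)) ≤ ε) :
    (∑ x ∈ Finset.univ.filter (fun x : BV n => wt x ≤ (d - 1) / 2), ρ x
        ≤ (C0.card : ℝ) * (Vball n ((d - 1) / 2) : ℝ) / 2 ^ n + ε) ∧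
    (∑ x ∈ Finset.univ.filter (fun x : BV n => n - (d - 1) / 2 ≤ wt x), ρ x
        ≤ (C0.card : ℝ) * (Vball n ((d - 1) / 2) : ℝ) / 2 ^ n + ε) := by
  constructor
  · have hk := key_lemma n C0 hC0 ε hε ρ hρ ht
      (Finset.univ.filter (fun x : BV n => wt x ≤ (d - 1) / 2))
    rwa [card_wt_le] at hk
  · have hk := key_lemma n C0 hC0 ε hε ρ hρ ht
      (Finset.univ.filter (fun x : BV n => n - (d - 1) / 2 ≤ wt x))
    refine hk.trans ?_
    have hc := card_wt_ge_le n ((d - 1) / 2)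
    gcongr
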